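/- arXiv:2401.16763 — 3 statements merged into one kernel-verified Lean document; each statement's English description precedes it below -/
import Mathlib

section
/- The total energy function E(ρ, m, S) = |m|²/(2ρ) + c_V ρ^γ exp(S/(c_V ρ)), defined for ρ > 0, m ∈ ℝ^d, S ∈ ℝ, is a convex function of (ρ, m, S) on the open set {ρ > 0} × ℝ^d × ℝ. -/
open Real

local notation "⟪" x ", " y "⟫" => @inner ℝ _ _ x y

private lemma pos_combo {a b r s : ℝ} (ha : 0 ≤ a) (hb : 0 ≤ b) (hab : a + b = 1)
    (hr : 0 < r) (hs : 0 < s) : 0 < a * r + b * s := by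
  rcases ha.eq_or_lt with h | h
  · have hb1 : b = 1 := by linarith
    rw [← h, hb1]; simpa using hs
  · have h1 : 0 < a * r := mul_pos h hr
    have h2 : 0 ≤ b * s := mul_nonneg hb hs.le
    linarith

private lemma key_ineq (γ : ℝ) (hγ : 1 < γ) (r t : ℝ) (hr : 0 < r) :
    1 + γ * (r - 1) + r * t ≤ r ^ γ * Real.exp t := by
  have hlog : r - 1 ≤ r * Real.log r := by
    have h1 : Real.log (1 / r) ≤ 1 / r - 1 := Real.log_le_sub_one_of_pos (by positivity)
    rw [one_div, Real.log_inv] at h1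
    have h2 : 1 - r⁻¹ ≤ Real.log r := by linarith
    have h3 := mul_le_mul_of_nonneg_left h2 hr.le
    have h4 : r * (1 - r⁻¹) = r - 1 := by field_simp
    linarith
  have hrg : r ^ γ * Real.exp t = r * Real.exp ((γ - 1) * Real.log r + t) := by
    rw [Real.rpow_def_of_pos hr, ← Real.exp_add]
    nth_rewrite 2 [← Real.exp_log hr]
    rw [← Real.exp_add]
    congr 1
    ring
  rw [hrg]
  have hexp : (γ - 1) * Real.log r + t + 1 ≤ Real.exp ((γ - 1) * Real.log r + t) :=
    Real.add_one_le_exp _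
  have h5 := mul_le_mul_of_nonneg_left hexp hr.le
  have h6 := mul_le_mul_of_nonneg_left hlog (by linarith : (0:ℝ) ≤ γ - 1)
  nlinarith [h5, h6]

private lemma kinetic_tangent {d : ℕ} (ρ ρ' : ℝ) (hρ : 0 < ρ) (hρ' : 0 < ρ')
    (m m' : EuclideanSpace ℝ (Fin d)) :
    ‖m‖ ^ 2 / (2 * ρ) - ‖m‖ ^ 2 / (2 * ρ ^ 2) * (ρ' - ρ) + (1 / ρ) * ⟪m, m'⟫ - ‖m‖ ^ 2 / ρ
      ≤ ‖m'‖ ^ 2 / (2 * ρ') := by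
  have hv : (0:ℝ) ≤ ‖ρ • m' - ρ' • m‖ ^ 2 := sq_nonneg _
  have hexp : ‖ρ • m' - ρ' • m‖ ^ 2
      = ρ ^ 2 * ‖m'‖ ^ 2 - 2 * (ρ * ρ') * ⟪m, m'⟫ + ρ' ^ 2 * ‖m‖ ^ 2 := by
    rw [norm_sub_sq_real, norm_smul, norm_smul, real_inner_smul_left, real_inner_smul_right,
      real_inner_comm]
    simp [abs_of_pos hρ, abs_of_pos hρ', mul_pow]
    ring
  rw [hexp] at hv
  rw [← sub_nonneg]
  have heq : ‖m'‖ ^ 2 / (2 * ρ') -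
      (‖m‖ ^ 2 / (2 * ρ) - ‖m‖ ^ 2 / (2 * ρ ^ 2) * (ρ' - ρ) + (1 / ρ) * ⟪m, m'⟫ - ‖m‖ ^ 2 / ρ)
      = (ρ ^ 2 * ‖m'‖ ^ 2 - 2 * (ρ * ρ') * ⟪m, m'⟫ + ρ' ^ 2 * ‖m‖ ^ 2) / (2 * ρ' * ρ ^ 2) := by
    field_simp
    ring
  rw [heq]
  exact div_nonneg hv (by positivity)

private lemma internal_tangent (γ cV : ℝ) (hγ : 1 < γ) (hcV : cV = 1 / (γ - 1))
    (ρ ρ' S S' : ℝ) (hρ : 0 < ρ) (hρ' : 0 < ρ') :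
    cV * ρ ^ γ * Real.exp (S / (cV * ρ))
      + (cV * γ - S / ρ) * (ρ ^ γ / ρ) * Real.exp (S / (cV * ρ)) * (ρ' - ρ)
      + (ρ ^ γ / ρ) * Real.exp (S / (cV * ρ)) * (S' - S)
      ≤ cV * ρ' ^ γ * Real.exp (S' / (cV * ρ')) := by
  have hγ1 : 0 < γ - 1 := by linarith
  have hcV0 : 0 < cV := by rw [hcV]; positivity
  have hργ : 0 < ρ ^ γ := Real.rpow_pos_of_pos hρ γ
  have hρ'γ : 0 < ρ' ^ γ := Real.rpow_pos_of_pos hρ' γ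
  have key := key_ineq γ hγ (ρ' / ρ) (S' / (cV * ρ') - S / (cV * ρ)) (div_pos hρ' hρ)
  have hC : 0 ≤ cV * ρ ^ γ * Real.exp (S / (cV * ρ)) := by positivity
  have hmul := mul_le_mul_of_nonneg_left key hC
  have hrg : (ρ' / ρ) ^ γ = ρ' ^ γ / ρ ^ γ := Real.div_rpow hρ'.le hρ.le γ
  have hR : cV * ρ ^ γ * Real.exp (S / (cV * ρ)) *
      ((ρ' / ρ) ^ γ * Real.exp (S' / (cV * ρ') - S / (cV * ρ)))
      = cV * ρ' ^ γ * Real.exp (S' / (cV * ρ')) := by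
    rw [hrg, Real.exp_sub]
    field_simp
  have hL : cV * ρ ^ γ * Real.exp (S / (cV * ρ)) *
      (1 + γ * (ρ' / ρ - 1) + (ρ' / ρ) * (S' / (cV * ρ') - S / (cV * ρ)))
      = cV * ρ ^ γ * Real.exp (S / (cV * ρ))
        + (cV * γ - S / ρ) * (ρ ^ γ / ρ) * Real.exp (S / (cV * ρ)) * (ρ' - ρ)
        + (ρ ^ γ / ρ) * Real.exp (S / (cV * ρ)) * (S' - S) := by
    field_simp
    ring
  rw [hL, hR] at hmul
  exact hmul

set_option maxHeartbeats 1000000 in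
theorem total_energy_convex
    (d : ℕ) (hd : 1 ≤ d)
    (γ : ℝ) (hγ : 1 < γ) (cV : ℝ) (hcV : cV = 1 / (γ - 1)) :
    ConvexOn ℝ {x : ℝ × EuclideanSpace ℝ (Fin d) × ℝ | 0 < x.1}
      (fun x => ‖x.2.1‖ ^ 2 / (2 * x.1) + cV * x.1 ^ γ * Real.exp (x.2.2 / (cV * x.1))) := by
  constructor
  · intro x hx y hy a b ha hb hab
    simp only [Set.mem_setOf_eq] at hx hy ⊢
    have h : (a • x + b • y).1 = a * x.1 + b * y.1 := rfl
    rw [h]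
    exact pos_combo ha hb hab hx hy
  · intro x hx y hy a b ha hb hab
    simp only [Set.mem_setOf_eq] at hx hy
    obtain ⟨ρ₁, m₁, S₁⟩ := x
    obtain ⟨ρ₂, m₂, S₂⟩ := y
    simp only [Set.mem_setOf_eq] at hx hy
    have hb' : b = 1 - a := by linarith
    subst hb'
    simp only [Prod.smul_mk, Prod.mk_add_mk, smul_eq_mul]
    set zρ := a * ρ₁ + (1 - a) * ρ₂ with hzρ
    set zS := a * S₁ + (1 - a) * S₂ with hzS
    have hz : 0 < zρ := pos_combo ha hb (by ring) hx hy
    have hN : ‖a • m₁ + (1 - a) • m₂‖ ^ 2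
        = a * ⟪a • m₁ + (1 - a) • m₂, m₁⟫ + (1 - a) * ⟪a • m₁ + (1 - a) • m₂, m₂⟫ := by
      rw [← real_inner_self_eq_norm_sq]
      nth_rewrite 2 [show (a • m₁ + (1 - a) • m₂ : EuclideanSpace ℝ (Fin d))
        = a • m₁ + (1 - a) • m₂ from rfl]
      rw [inner_add_right, real_inner_smul_right, real_inner_smul_right]
    have h1k := kinetic_tangent zρ ρ₁ hz hx (a • m₁ + (1 - a) • m₂) m₁
    have h2k := kinetic_tangent zρ ρ₂ hz hy (a • m₁ + (1 - a) • m₂) m₂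
    have h1i := internal_tangent γ cV hγ hcV zρ ρ₁ zS S₁ hz hx
    have h2i := internal_tangent γ cV hγ hcV zρ ρ₂ zS S₂ hz hy
    have h1 := add_le_add h1k h1i
    have h2 := add_le_add h2k h2i
    have H1 := mul_le_mul_of_nonneg_left h1 ha
    have H2 := mul_le_mul_of_nonneg_left h2 hb
    set N := ‖a • m₁ + (1 - a) • m₂‖ ^ 2 with hNdef
    set A := (⟪a • m₁ + (1 - a) • m₂, m₁⟫ : ℝ) with hA
    set B := (⟪a • m₁ + (1 - a) • m₂, m₂⟫ : ℝ) with hB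
    set E := zρ ^ γ with hE
    set ee := Real.exp (zS / (cV * zρ)) with hee
    clear_value N A B E ee
    have heq : N / (2 * zρ) + cV * E * ee
        = a * (N / (2 * zρ) - N / (2 * zρ ^ 2) * (ρ₁ - zρ) + (1 / zρ) * A - N / zρ
              + (cV * E * ee
                + (cV * γ - zS / zρ) * (E / zρ) * ee * (ρ₁ - zρ)
                + (E / zρ) * ee * (S₁ - zS)))
          + (1 - a) * (N / (2 * zρ) - N / (2 * zρ ^ 2) * (ρ₂ - zρ) + (1 / zρ) * B - N / zρ
              + (cV * E * ee
                + (cV * γ - zS / zρ) * (E / zρ) * ee * (ρ₂ - zρ)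
                + (E / zρ) * ee * (S₂ - zS))) := by
      rw [hN, hzρ, hzS]
      have hzne : a * ρ₁ + (1 - a) * ρ₂ ≠ 0 := by rw [← hzρ]; exact hz.ne'
      field_simp
      ring
    linarith [H1, H2, heq]
end

section
/- Let E(ρ,m,S) = |m|²/(2ρ) + ρe(ρ,S) with ρe(ρ,S) = c_V ρ^γ exp(S/(c_V ρ)), γ > 1. Then the relative energy E(ρ,m,S | ρ̃, ũ, S̃) := (ρ/2)|m/ρ − ũ|² + ρe(ρ,S) − ∂_ρ(ρ̃ e(ρ̃,S̃))(ρ − ρ̃) − ∂_S(ρ̃ e(ρ̃,S̃))(S − S̃) − ρ̃ e(ρ̃,S̃) is nonnegative for all ρ, ρ̃ > 0, m ∈ ℝ^d, ũ ∈ ℝ^d, S, S̃ ∈ ℝ. -/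
open Real

private lemma key_convex_ineq (γ r u : ℝ) (hr : 0 < r) (hγ : 1 < γ) :
    1 + γ*(r-1) + r*u ≤ r ^ γ * Real.exp u := by
  have h1 : r ^ γ * Real.exp u = r * Real.exp ((γ-1) * Real.log r + u) := by
    rw [Real.rpow_def_of_pos hr, ← Real.exp_add,
      show Real.log r * γ + u = Real.log r + ((γ-1)*Real.log r + u) by ring,
      Real.exp_add, Real.exp_log hr]
  have h2 : ((γ-1) * Real.log r + u) + 1 ≤ Real.exp ((γ-1) * Real.log r + u) :=
    Real.add_one_le_exp _
  have h3 : Real.log r⁻¹ ≤ r⁻¹ - 1 := Real.log_le_sub_one_of_pos (by positivity)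
  rw [Real.log_inv] at h3
  have h4 : r - 1 ≤ r * Real.log r := by
    nlinarith [mul_le_mul_of_nonneg_left h3 hr.le, mul_inv_cancel₀ hr.ne']
  nlinarith [mul_le_mul_of_nonneg_left h2 hr.le]

theorem relative_energy_nonneg
    (d : ℕ) (hd : 1 ≤ d)
    (γ : ℝ) (hγ : 1 < γ) (cV : ℝ) (hcV : cV = 1 / (γ - 1))
    (H : ℝ → ℝ → ℝ)
    (hH : ∀ ρ S : ℝ, H ρ S = cV * ρ ^ γ * Real.exp (S / (cV * ρ)))
    (ρ ρt : ℝ) (hρ : 0 < ρ) (hρt : 0 < ρt)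
    (m ut : EuclideanSpace ℝ (Fin d)) (S St : ℝ)
    (Hρ HS : ℝ)
    (hHρ : HasDerivAt (fun r => H r St) Hρ ρt)
    (hHS : HasDerivAt (fun s => H ρt s) HS St) :
    0 ≤ ρ / 2 * ‖(ρ⁻¹ • m : EuclideanSpace ℝ (Fin d)) - ut‖ ^ 2 + H ρ S
        - Hρ * (ρ - ρt) - HS * (S - St) - H ρt St := by
  have hcV0 : 0 < cV := by
    rw [hcV]
    have : 0 < γ - 1 := by linarith
    positivity
  set ett := Real.exp (St / (cV * ρt)) with hett
  set et := Real.exp (S / (cV * ρ)) with het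
  -- identify Hρ
  have hA : HasDerivAt (fun r : ℝ => r ^ γ) (γ * ρt ^ (γ-1)) ρt :=
    Real.hasDerivAt_rpow_const (Or.inl hρt.ne')
  have hB : HasDerivAt (fun r : ℝ => (St/cV) * r⁻¹) ((St/cV) * (-(ρt^2)⁻¹)) ρt :=
    (hasDerivAt_inv hρt.ne').const_mul (St/cV)
  have hfun : (fun r => H r St) =
      fun r : ℝ => cV * (r ^ γ * Real.exp ((St/cV) * r⁻¹)) := by
    funext r
    rw [hH, show St / (cV*r) = St/cV * r⁻¹ by rw [← div_div, div_eq_mul_inv], mul_assoc]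
  have hderρ : HasDerivAt (fun r => H r St)
      (cV * (γ * ρt ^ (γ-1) * Real.exp ((St/cV) * ρt⁻¹)
        + ρt ^ γ * (Real.exp ((St/cV) * ρt⁻¹) * ((St/cV) * (-(ρt^2)⁻¹))))) ρt := by
    rw [hfun]
    exact (hA.mul hB.exp).const_mul cV
  have hHρval : Hρ = cV * (γ * ρt ^ (γ-1) * ett
        + ρt ^ γ * (ett * ((St/cV) * (-(ρt^2)⁻¹)))) := by
    have h6 : St/cV * ρt⁻¹ = St / (cV * ρt) := by rw [← div_eq_mul_inv, div_div]
    rw [hHρ.unique hderρ, h6, hett]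
  -- identify HS
  have hgfun : (fun s => H ρt s) =
      fun s : ℝ => (cV * ρt ^ γ) * Real.exp (s * (cV * ρt)⁻¹) := by
    funext s
    rw [hH, div_eq_mul_inv, mul_assoc]
  have hderS : HasDerivAt (fun s => H ρt s)
      ((cV * ρt ^ γ) * (Real.exp (St * (cV * ρt)⁻¹) * (cV * ρt)⁻¹)) St := by
    rw [hgfun]
    exact ((hasDerivAt_id St).mul_const ((cV*ρt)⁻¹)).exp.const_mul (cV * ρt^γ) |>.congr_deriv
      (by simp)
  have hHSval : HS = (cV * ρt ^ γ) * (ett * (cV * ρt)⁻¹) := by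
    have := hHS.unique hderS
    rw [this, hett, div_eq_mul_inv]
  -- positivity facts
  have hPt : (0:ℝ) < ρt ^ γ := Real.rpow_pos_of_pos hρt γ
  have hP : (0:ℝ) < ρ ^ γ := Real.rpow_pos_of_pos hρ γ
  have hettpos : 0 < ett := Real.exp_pos _
  have hetpos : 0 < et := Real.exp_pos _
  have hP1 : ρt ^ (γ-1) = ρt ^ γ / ρt := by
    rw [Real.rpow_sub hρt, Real.rpow_one]
  -- key inequality
  set u : ℝ := S / (cV * ρ) - St / (cV * ρt) with hu
  have hkey := key_convex_ineq γ (ρ/ρt) u (by positivity) hγ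
  have hC : 0 < cV * ρt ^ γ * ett := by positivity
  have hmul := mul_le_mul_of_nonneg_left hkey hC.le
  have e2 : cV * ρt ^ γ * ett * ((ρ/ρt) ^ γ * Real.exp u) = H ρ S := by
    rw [hH, Real.div_rpow hρ.le hρt.le, hu, Real.exp_sub, ← het, ← hett]
    field_simp
  have e1 : cV * ρt ^ γ * ett * (1 + γ*(ρ/ρt - 1) + (ρ/ρt)*u) =
      H ρt St + Hρ * (ρ - ρt) + HS * (S - St) := by
    rw [hH ρt St, ← hett, hHρval, hHSval, hP1, hu]
    field_simp
    ring
  have hkin : 0 ≤ ρ / 2 * ‖(ρ⁻¹ • m : EuclideanSpace ℝ (Fin d)) - ut‖ ^ 2 := by positivity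
  rw [e1, e2] at hmul
  linarith
end

section
/- Strict convexity of the internal energy: the function H(ρ,S) = c_V ρ^γ exp(S/(c_V ρ)) is strictly convex on (0,∞) × ℝ, i.e. its Hessian is positive definite at every point (ρ,S) with ρ > 0. -/
open Real

theorem internal_energy_strictConvex
    (γ : ℝ) (hγ : 1 < γ) (cV : ℝ) (hcV : cV = 1 / (γ - 1)) :
    StrictConvexOn ℝ {p : ℝ × ℝ | 0 < p.1}
      (fun p => cV * p.1 ^ γ * Real.exp (p.2 / (cV * p.1))) := by
  have hγ0 : (0:ℝ) < γ := by linarith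
  have hγ1 : (0:ℝ) < γ - 1 := by linarith
  have hcV0 : 0 < cV := by rw [hcV]; positivity
  -- the auxiliary function g r s = r * exp (s / (γ * cV * r))
  set g : ℝ → ℝ → ℝ := fun r s => r * Real.exp (s / (γ * cV * r)) with hg
  have hgpos : ∀ r s : ℝ, 0 < r → 0 < g r s := fun r s hr => by positivity
  -- key identity : cV * (g r s) ^ γ = cV * r ^ γ * exp (s / (cV * r))
  have hkey : ∀ r s : ℝ, 0 < r →
      cV * g r s ^ γ = cV * r ^ γ * Real.exp (s / (cV * r)) := by
    intro r s hr
    have h1 : g r s ^ γ = r ^ γ * Real.exp (s / (γ * cV * r)) ^ γ :=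
      Real.mul_rpow hr.le (Real.exp_pos _).le
    have h2 : Real.exp (s / (γ * cV * r)) ^ γ = Real.exp (s / (cV * r)) := by
      rw [← Real.exp_mul]
      congr 1
      field_simp
    rw [h1, h2]; ring
  constructor
  · exact (convex_Ioi (0:ℝ)).linear_preimage (LinearMap.fst ℝ ℝ ℝ)
  · intro P hP Q hQ hPQ a b ha hb hab
    simp only [Set.mem_setOf_eq] at hP hQ
    obtain ⟨ρp, Sp⟩ := P
    obtain ⟨ρq, Sq⟩ := Q
    simp only at hP hQ ⊢
    have hmid : ((a • (ρp, Sp) + b • (ρq, Sq) : ℝ × ℝ)) = (a * ρp + b * ρq, a * Sp + b * Sq) := by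
      simp [Prod.ext_iff]
    rw [hmid]
    have hρ : 0 < a * ρp + b * ρq := by positivity
    -- rewrite everything through g
    rw [← hkey _ _ hρ, ← hkey _ _ hP, ← hkey _ _ hQ]
    set u := Sp / (γ * cV * ρp) with hu
    set v := Sq / (γ * cV * ρq) with hv
    have hGsplit : g (a * ρp + b * ρq) (a * Sp + b * Sq)
        = (a * ρp + b * ρq) *
          Real.exp ((a * ρp / (a * ρp + b * ρq)) * u + (b * ρq / (a * ρp + b * ρq)) * v) := by
      simp only [hg]
      congr 2
      rw [hu, hv]
      field_simp
    have hw1 : 0 < a * ρp / (a * ρp + b * ρq) := by positivity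
    have hw2 : 0 < b * ρq / (a * ρp + b * ρq) := by positivity
    have hwsum : a * ρp / (a * ρp + b * ρq) + b * ρq / (a * ρp + b * ρq) = 1 := by
      field_simp
    by_cases huv : u = v
    · -- equal ratios: g is exactly affine, use strict convexity of rpow
      have hGeq : g (a * ρp + b * ρq) (a * Sp + b * Sq) = a * g ρp Sp + b * g ρq Sq := by
        rw [hGsplit, huv]
        have hh : (a * ρp / (a * ρp + b * ρq)) * v + (b * ρq / (a * ρp + b * ρq)) * v = v := by
          field_simp
        rw [hh]
        have e1 : Real.exp (Sp / (γ * cV * ρp)) = Real.exp v := by rw [← hu, huv]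
        simp only [hg]
        rw [e1, ← hv]
        ring
      have hne : g ρp Sp ≠ g ρq Sq := by
        intro h
        simp only [hg] at h
        rw [hu, hv] at huv
        by_cases hρpq : ρp = ρq
        · apply hPQ
          subst hρpq
          have hden : γ * cV * ρp ≠ 0 := by positivity
          have hSpq : Sp = Sq :=
            mul_right_cancel₀ hden ((div_eq_div_iff hden hden).mp huv)
          rw [hSpq]
        · exact hρpq (by rw [huv] at h; exact mul_right_cancel₀ (ne_of_gt (Real.exp_pos _)) h)
      have := strictConvexOn_rpow hγ
      have hs := this.2 (Set.mem_Ici.2 (hgpos ρp Sp hP).le) (Set.mem_Ici.2 (hgpos ρq Sq hQ).le)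
        hne ha hb hab
      simp only [smul_eq_mul] at hs
      rw [hGeq]
      calc cV * (a * g ρp Sp + b * g ρq Sq) ^ γ
          < cV * (a * g ρp Sp ^ γ + b * g ρq Sq ^ γ) := by
            exact (mul_lt_mul_iff_right₀ hcV0).2 hs
        _ = a * (cV * g ρp Sp ^ γ) + b * (cV * g ρq Sq ^ γ) := by ring
    · -- distinct ratios: strict convexity of exp gives strict inequality for g
      have hexp := strictConvexOn_exp.2 (Set.mem_univ u) (Set.mem_univ v) huv hw1 hw2 hwsum
      simp only [smul_eq_mul] at hexp
      have hGlt : g (a * ρp + b * ρq) (a * Sp + b * Sq) < a * g ρp Sp + b * g ρq Sq := by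
        rw [hGsplit]
        have h2 : (a * ρp + b * ρq) *
            ((a * ρp / (a * ρp + b * ρq)) * Real.exp u + (b * ρq / (a * ρp + b * ρq)) * Real.exp v)
            = a * g ρp Sp + b * g ρq Sq := by
          simp only [hg]
          field_simp
          rw [hu, hv]; ring_nf
        calc (a * ρp + b * ρq) *
            Real.exp ((a * ρp / (a * ρp + b * ρq)) * u + (b * ρq / (a * ρp + b * ρq)) * v)
            < (a * ρp + b * ρq) *
              ((a * ρp / (a * ρp + b * ρq)) * Real.exp u
                + (b * ρq / (a * ρp + b * ρq)) * Real.exp v) :=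
              (mul_lt_mul_iff_right₀ hρ).2 hexp
          _ = a * g ρp Sp + b * g ρq Sq := h2
      have hmono : g (a * ρp + b * ρq) (a * Sp + b * Sq) ^ γ
          < (a * g ρp Sp + b * g ρq Sq) ^ γ :=
        Real.rpow_lt_rpow (hgpos _ _ hρ).le hGlt hγ0
      have hconv := (convexOn_rpow hγ.le).2 (Set.mem_Ici.2 (hgpos ρp Sp hP).le)
        (Set.mem_Ici.2 (hgpos ρq Sq hQ).le) ha.le hb.le hab
      simp only [smul_eq_mul] at hconv
      calc cV * g (a * ρp + b * ρq) (a * Sp + b * Sq) ^ γ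
          < cV * (a * g ρp Sp + b * g ρq Sq) ^ γ := (mul_lt_mul_iff_right₀ hcV0).2 hmono
        _ ≤ cV * (a * g ρp Sp ^ γ + b * g ρq Sq ^ γ) := (mul_le_mul_iff_right₀ hcV0).2 hconv
        _ = a * (cV * g ρp Sp ^ γ) + b * (cV * g ρq Sq ^ γ) := by ring
end
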